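/- arXiv:2101.09813 — 7 statements merged into one kernel-verified Lean document; each statement's English description precedes it below -/
import Mathlib

section
/- Let m ≥ 1, r > 0, and let X, Y : Fin n → ℝ^m be injective families of points, each of whose ranges is in general position. Suppose that for all indices i, j one has dist(X i, X j) ≤ 2r if and only if dist(Y i, Y j) ≤ 2r, and that whenever dist(X i, X j) ≤ 2r one has dist(X i, X j) = dist(Y i, Y j). Then for every nonempty subset s ⊆ Fin n, the intersection ⋂_{i ∈ s}(B̄_r(X i) ∩ V_{X i}) (Voronoi regions taken with respect to the range of X) is nonempty if and only if ⋂_{i ∈ s}(B̄_r(Y i) ∩ V_{Y i}) (Voronoi regions taken with respect to the range of Y) is nonempty. In other words, the local distance data (which pairs are within distance 2r, and the exact distances of those pairs) determines the alpha complex. -/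
open Metric Set

open scoped RealInnerProductSpace


/-- Any distance-preserving correspondence between finite families of points in
Euclidean space extends to a global isometry. -/
lemma exists_isometry_map_of_dist_eq {m : ℕ} {ι : Type*} [Fintype ι]
    (p q : ι → EuclideanSpace ℝ (Fin m))
    (h : ∀ a b, dist (p a) (p b) = dist (q a) (q b)) :
    ∃ f : EuclideanSpace ℝ (Fin m) → EuclideanSpace ℝ (Fin m),
      Isometry f ∧ ∀ a, f (p a) = q a := by
  classical
  cases isEmpty_or_nonempty ι with
  | inl hι => exact ⟨id, isometry_id, fun a => (IsEmpty.false a).elim⟩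
  | inr hι =>
  obtain ⟨a₀⟩ := hι
  set u : ι → EuclideanSpace ℝ (Fin m) := fun a => p a - p a₀ with hu
  set v : ι → EuclideanSpace ℝ (Fin m) := fun a => q a - q a₀ with hv
  have hnorm0 : ∀ a, ‖u a‖ = ‖v a‖ := by
    intro a; simpa [hu, hv, dist_eq_norm] using h a a₀
  have hnormsub : ∀ a b, ‖u a - u b‖ = ‖v a - v b‖ := by
    intro a b
    have h1 : u a - u b = p a - p b := by
      show (p a - p a₀) - (p b - p a₀) = p a - p b; abel
    have h2 : v a - v b = q a - q b := by
      show (q a - q a₀) - (q b - q a₀) = q a - q b; abel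
    rw [h1, h2, ← dist_eq_norm, ← dist_eq_norm]
    exact h a b
  have hinner : ∀ a b, ⟪u a, u b⟫ = ⟪v a, v b⟫ := by
    intro a b
    have h1 := norm_sub_sq_real (u a) (u b)
    have h2 := norm_sub_sq_real (v a) (v b)
    rw [hnormsub a b, hnorm0 a, hnorm0 b] at h1
    linarith
  -- linear combination maps
  let Lu : (ι → ℝ) →ₗ[ℝ] EuclideanSpace ℝ (Fin m) :=
    { toFun := fun c => ∑ a, c a • u a
      map_add' := by intro c c'; simp [add_smul, Finset.sum_add_distrib]
      map_smul' := by intro t c; simp [smul_smul, Finset.smul_sum] }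
  let Lv : (ι → ℝ) →ₗ[ℝ] EuclideanSpace ℝ (Fin m) :=
    { toFun := fun c => ∑ a, c a • v a
      map_add' := by intro c c'; simp [add_smul, Finset.sum_add_distrib]
      map_smul' := by intro t c; simp [smul_smul, Finset.smul_sum] }
  have hLinner : ∀ c c' : ι → ℝ, ⟪Lu c, Lu c'⟫ = ⟪Lv c, Lv c'⟫ := by
    intro c c'
    show ⟪∑ a, c a • u a, ∑ b, c' b • u b⟫ = ⟪∑ a, c a • v a, ∑ b, c' b • v b⟫
    rw [sum_inner, sum_inner]
    refine Finset.sum_congr rfl fun a _ => ?_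
    rw [inner_sum, inner_sum]
    refine Finset.sum_congr rfl fun b _ => ?_
    rw [real_inner_smul_left, real_inner_smul_left, real_inner_smul_right,
      real_inner_smul_right, hinner a b]
  have hLnorm : ∀ c : ι → ℝ, ‖Lu c‖ = ‖Lv c‖ := by
    intro c
    rw [← sq_eq_sq₀ (norm_nonneg _) (norm_nonneg _), ← real_inner_self_eq_norm_sq,
      ← real_inner_self_eq_norm_sq, hLinner]
  have hker : LinearMap.ker Lu ≤ LinearMap.ker Lv := by
    intro c hc
    rw [LinearMap.mem_ker] at hc ⊢
    have := hLnorm c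
    rw [hc, norm_zero] at this
    exact norm_eq_zero.mp this.symm
  set S := LinearMap.range Lu with hS
  let φ : S →ₗ[ℝ] EuclideanSpace ℝ (Fin m) :=
    ((LinearMap.ker Lu).liftQ Lv hker).comp Lu.quotKerEquivRange.symm.toLinearMap
  have hφ : ∀ c : ι → ℝ, φ ⟨Lu c, LinearMap.mem_range_self _ c⟩ = Lv c := by
    intro c
    simp only [φ, LinearMap.comp_apply, LinearEquiv.coe_toLinearMap]
    rw [LinearMap.quotKerEquivRange_symm_apply_image]
    simp [Submodule.mkQ_apply]
  have hφnorm : ∀ x : S, ‖φ x‖ = ‖x‖ := by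
    rintro ⟨x, hx⟩
    obtain ⟨c, rfl⟩ := hx
    rw [hφ c]
    simpa using (hLnorm c).symm
  let Lisom : S →ₗᵢ[ℝ] EuclideanSpace ℝ (Fin m) := ⟨φ, hφnorm⟩
  let Φ := Lisom.extend
  have hΦu : ∀ a, Φ (u a) = v a := by
    intro a
    have hmem : u a = Lu (Pi.single a 1) := by
      show u a = ∑ b, Pi.single a 1 b • u b
      rw [Finset.sum_eq_single a]
      · simp
      · intro b _ hb; simp [Pi.single_apply, if_neg hb]
      · intro hb; exact absurd (Finset.mem_univ a) hb
    have : Φ (u a) = Lisom ⟨u a, hmem ▸ LinearMap.mem_range_self _ _⟩ :=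
      Lisom.extend_apply ⟨u a, hmem ▸ LinearMap.mem_range_self _ _⟩
    rw [this]
    show φ _ = v a
    have : (⟨u a, hmem ▸ LinearMap.mem_range_self _ _⟩ : S)
        = ⟨Lu (Pi.single a 1), LinearMap.mem_range_self _ _⟩ := by
      exact Subtype.ext hmem
    rw [this, hφ]
    show ∑ b, Pi.single a 1 b • v b = v a
    rw [Finset.sum_eq_single a]
    · simp
    · intro b _ hb; simp [Pi.single_apply, if_neg hb]
    · intro hb; exact absurd (Finset.mem_univ a) hb
  refine ⟨fun x => q a₀ + Φ (x - p a₀), ?_, ?_⟩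
  · apply Isometry.of_dist_eq
    intro x y
    simp only [dist_eq_norm]
    rw [add_sub_add_left_eq_sub, ← map_sub, Φ.norm_map]
    congr 1
    abel
  · intro a
    show q a₀ + Φ (p a - p a₀) = q a
    have h1 : p a - p a₀ = u a := rfl
    rw [h1, hΦu a]
    show q a₀ + (q a - q a₀) = q a
    abel

private lemma le_of_sq_le_sq' {a b : ℝ} (hb : 0 ≤ b) (h : a ^ 2 ≤ b ^ 2) : a ≤ b := by
  nlinarith

private lemma lt_of_sq_lt_sq' {a b : ℝ} (hb : 0 ≤ b) (h : a ^ 2 < b ^ 2) : a < b := by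
  nlinarith

lemma alpha_key {m n : ℕ} (r : ℝ) (hr : 0 < r)
    (X Y : Fin n → EuclideanSpace ℝ (Fin m))
    (hiff : ∀ i j, dist (X i) (X j) ≤ 2 * r ↔ dist (Y i) (Y j) ≤ 2 * r)
    (heq : ∀ i j, dist (X i) (X j) ≤ 2 * r → dist (X i) (X j) = dist (Y i) (Y j))
    (s : Finset (Fin n)) (hs : s.Nonempty)
    (hne : (⋂ i ∈ s, closedBall (X i) r ∩
        {y : EuclideanSpace ℝ (Fin m) | ∀ j, dist y (X i) ≤ dist y (X j)}).Nonempty) :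
    (⋂ i ∈ s, closedBall (Y i) r ∩
        {y : EuclideanSpace ℝ (Fin m) | ∀ j, dist y (Y i) ≤ dist y (Y j)}).Nonempty := by
  classical
  obtain ⟨i₀, hi₀⟩ := hs
  obtain ⟨y₀, hy₀⟩ := hne
  simp only [Set.mem_iInter, Set.mem_inter_iff, Metric.mem_closedBall, Set.mem_setOf_eq] at hy₀
  -- the Voronoi polytope
  set P : Set (EuclideanSpace ℝ (Fin m)) :=
    {y | ∀ i ∈ s, ∀ j, dist y (X i) ≤ dist y (X j)} with hP
  have hy₀P : y₀ ∈ P := fun i hi j => (hy₀ i hi).2 j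
  have hy₀r : dist y₀ (X i₀) ≤ r := (hy₀ i₀ hi₀).1
  have hPclosed : IsClosed P := by
    have : P = ⋂ i ∈ s, ⋂ j, {y | dist y (X i) ≤ dist y (X j)} := by
      ext y; simp [hP, Set.mem_iInter]
    rw [this]
    exact isClosed_biInter fun i _ => isClosed_iInter fun j =>
      isClosed_le (continuous_id.dist continuous_const) (continuous_id.dist continuous_const)
  -- minimize the common distance over P
  have hKcomp : IsCompact (closedBall (X i₀) r ∩ P) :=
    (isCompact_closedBall (X i₀) r).inter_right hPclosed
  have hKne : (closedBall (X i₀) r ∩ P).Nonempty := ⟨y₀, mem_closedBall.mpr hy₀r, hy₀P⟩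
  obtain ⟨y', hy'K, hmin⟩ := hKcomp.exists_isMinOn hKne
    ((continuous_id.dist (continuous_const : Continuous fun _ => X i₀)).continuousOn)
  set d : ℝ := dist y' (X i₀) with hd
  have hy'P : y' ∈ P := hy'K.2
  have hdr : d ≤ r := mem_closedBall.mp hy'K.1
  have hd0 : 0 ≤ d := dist_nonneg
  have hmin' : ∀ w ∈ P, d ≤ dist w (X i₀) := by
    intro w hw
    by_cases hwb : dist w (X i₀) ≤ r
    · exact hmin ⟨mem_closedBall.mpr hwb, hw⟩
    · linarith [not_le.mp hwb]
  have heqd : ∀ i ∈ s, dist y' (X i) = d :=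
    fun i hi => le_antisymm (hy'P i hi i₀) (hy'P i₀ hi₀ i)
  -- the active set
  set T : Finset (Fin n) := Finset.univ.filter (fun k => dist y' (X k) = d) with hT
  have hsT : s ⊆ T := fun i hi => Finset.mem_filter.mpr ⟨Finset.mem_univ _, heqd i hi⟩
  have hTd : ∀ k ∈ T, dist y' (X k) = d := fun k hk => (Finset.mem_filter.mp hk).2
  have hTd' : ∀ k ∉ T, d < dist y' (X k) := by
    intro k hk
    refine lt_of_le_of_ne (hy'P i₀ hi₀ k) fun hc => hk ?_
    exact Finset.mem_filter.mpr ⟨Finset.mem_univ _, hc.symm⟩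
  -- distances within T transfer to Y
  have hXYT : ∀ k ∈ T, ∀ l ∈ T, dist (X k) (X l) = dist (Y k) (Y l) := by
    intro k hk l hl
    refine heq k l ?_
    calc dist (X k) (X l) ≤ dist (X k) y' + dist y' (X l) := dist_triangle _ _ _
      _ = d + d := by rw [dist_comm (X k) y', hTd k hk, hTd l hl]
      _ ≤ 2 * r := by linarith
  obtain ⟨F, hFiso, hF⟩ := exists_isometry_map_of_dist_eq
    (fun k : {k // k ∈ T} => X k) (fun k : {k // k ∈ T} => Y k)
    (fun a b => hXYT a a.2 b b.2)
  set z₀ := F y' with hz₀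
  have hz₀T : ∀ k ∈ T, dist z₀ (Y k) = d := by
    intro k hk
    rw [hz₀, ← hF ⟨k, hk⟩, hFiso.dist_eq, hTd k hk]
  -- main claim: z₀ is far from every Y point
  have hclaim : ∀ k, d ≤ dist z₀ (Y k) := by
    intro k
    by_cases hk : k ∈ T
    · exact (hz₀T k hk).ge
    by_contra hlt
    push_neg at hlt
    -- distances within T ∪ {k} transfer back from Y to X
    have hYXT' : ∀ a ∈ insert k T, ∀ b ∈ insert k T, dist (Y a) (Y b) = dist (X a) (X b) := by
      have haux : ∀ b ∈ T, dist (Y k) (Y b) = dist (X k) (X b) := by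
        intro b hb
        have h2r : dist (Y k) (Y b) ≤ 2 * r := by
          calc dist (Y k) (Y b) ≤ dist (Y k) z₀ + dist z₀ (Y b) := dist_triangle _ _ _
            _ ≤ d + d := by
                rw [dist_comm (Y k) z₀, hz₀T b hb]
                linarith [le_of_lt hlt]
            _ ≤ 2 * r := by linarith
        exact (heq k b ((hiff k b).mpr h2r)).symm
      intro a ha b hb
      rcases Finset.mem_insert.mp ha with rfl | haT
      · rcases Finset.mem_insert.mp hb with rfl | hbT
        · simp
        · exact haux b hbT
      · rcases Finset.mem_insert.mp hb with rfl | hbT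
        · rw [dist_comm, dist_comm (X a) (X b)]; exact haux a haT
        · exact (hXYT a haT b hbT).symm
    obtain ⟨G, hGiso, hG⟩ := exists_isometry_map_of_dist_eq
      (fun a : {a // a ∈ insert k T} => Y a) (fun a : {a // a ∈ insert k T} => X a)
      (fun a b => hYXT' a a.2 b b.2)
    set z := G z₀ with hz
    have hzd : ∀ a ∈ insert k T, dist z (X a) = dist z₀ (Y a) := by
      intro a ha
      rw [hz, ← hG ⟨a, ha⟩, hGiso.dist_eq]
    have hzT : ∀ a ∈ T, dist z (X a) = d := by
      intro a ha
      rw [hzd a (Finset.mem_insert_of_mem ha), hz₀T a ha]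
    have hzk : dist z (X k) < d := by
      rw [hzd k (Finset.mem_insert_self k T)]; exact hlt
    by_cases hzy : z = y'
    · rw [hzy] at hzk
      linarith [hTd' k hk]
    -- strict convexity contradiction
    have hD : 0 < dist y' z := dist_pos.mpr (Ne.symm hzy)
    -- gap over the complement of T
    set B : Finset (Fin n) := Finset.univ \ T with hB
    have hkB : k ∈ B := Finset.mem_sdiff.mpr ⟨Finset.mem_univ _, hk⟩
    set δ : ℝ := B.inf' ⟨k, hkB⟩ (fun l => dist y' (X l) ^ 2 - d ^ 2) with hδ
    have hδpos : 0 < δ := by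
      rw [hδ]
      refine (Finset.lt_inf'_iff _).2 ?_
      intro l hl
      have := hTd' l (Finset.mem_sdiff.mp hl).2
      nlinarith
    have hδle : ∀ l, l ∉ T → δ ≤ dist y' (X l) ^ 2 - d ^ 2 := by
      intro l hl
      exact Finset.inf'_le _ (Finset.mem_sdiff.mpr ⟨Finset.mem_univ _, hl⟩)
    set ε : ℝ := δ / (δ + d ^ 2 + 1) with hε
    have hden : 0 < δ + d ^ 2 + 1 := by positivity
    have hε0 : 0 < ε := by positivity
    have hε1 : ε < 1 := by
      rw [hε, div_lt_one hden]; nlinarith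
    have hεkey : ε * (d ^ 2 + δ) ≤ δ := by
      rw [hε, div_mul_eq_mul_div, div_le_iff₀ hden]; nlinarith
    set w : EuclideanSpace ℝ (Fin m) := y' + ε • (z - y') with hw
    -- the parallelogram-type identity
    have hident : ∀ x : EuclideanSpace ℝ (Fin m),
        dist w x ^ 2 = (1 - ε) * dist y' x ^ 2 + ε * dist z x ^ 2
          - ε * (1 - ε) * dist y' z ^ 2 := by
      intro x
      have h1 : w - x = (y' - x) + ε • (z - y') := by rw [hw]; abel
      have h2 : z - x = (y' - x) + (z - y') := by abel
      rw [dist_eq_norm, dist_eq_norm, dist_eq_norm, dist_eq_norm, h1]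
      rw [norm_add_sq_real, real_inner_smul_right, norm_smul, Real.norm_eq_abs,
        abs_of_pos hε0, mul_pow]
      rw [show y' - z = -(z - y') from by abel, norm_neg]
      conv_rhs => rw [h2, norm_add_sq_real]
      ring
    have hwT : ∀ a ∈ T, dist w (X a) ^ 2 = d ^ 2 - ε * (1 - ε) * dist y' z ^ 2 := by
      intro a ha
      rw [hident, hTd a ha, hzT a ha]; ring
    have hgap : 0 < ε * (1 - ε) * dist y' z ^ 2 :=
      mul_pos (mul_pos hε0 (by linarith)) (pow_pos hD 2)
    -- w is in P
    have hwP : w ∈ P := by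
      intro i hi j
      have hiT := hsT hi
      have hwl : ∀ l, l ∉ T → dist w (X i) ^ 2 ≤ dist w (X l) ^ 2 := by
        intro l hl
        rw [hwT i hiT, hident]
        have h1 : d ^ 2 + δ ≤ dist y' (X l) ^ 2 := by linarith [hδle l hl]
        have h2 : 0 ≤ ε * dist z (X l) ^ 2 := mul_nonneg hε0.le (sq_nonneg _)
        have h3 : (1 - ε) * (d ^ 2 + δ) ≤ (1 - ε) * dist y' (X l) ^ 2 :=
          mul_le_mul_of_nonneg_left h1 (by linarith)
        have h4 : (1 - ε) * (d ^ 2 + δ) = d ^ 2 + δ - ε * (d ^ 2 + δ) := by ring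
        linarith
      have hsq : dist w (X i) ^ 2 ≤ dist w (X j) ^ 2 := by
        by_cases hjT : j ∈ T
        · rw [hwT i hiT, hwT j hjT]
        · exact hwl j hjT
      exact le_of_sq_le_sq' dist_nonneg hsq
    -- contradiction with minimality
    have hcontra : dist w (X i₀) < d := by
      refine lt_of_sq_lt_sq' hd0 ?_
      rw [hwT i₀ (hsT hi₀)]
      linarith
    linarith [hmin' w hwP]
  -- conclude
  refine ⟨z₀, ?_⟩
  simp only [Set.mem_iInter, Set.mem_inter_iff, Metric.mem_closedBall, Set.mem_setOf_eq]
  intro i hi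
  have hiT := hsT hi
  refine ⟨by rw [hz₀T i hiT]; exact hdr, fun j => ?_⟩
  rw [hz₀T i hiT]
  exact hclaim j

/-- **Local distance data determines the alpha complex.**
If two injective families of points in `ℝ^m`, each in general position, have the same
"local distance data" (which pairs are within distance `2r`, and the exact distances of
those pairs), then for every nonempty index set `s` the intersections of the
Voronoi-clipped sensing balls over `s` are simultaneously nonempty or empty; i.e. the
two configurations have the same alpha complex. -/
theorem alpha_complex_determined_by_local_distances {m n : ℕ} (hm : 1 ≤ m) (r : ℝ) (hr : 0 < r)
    (X Y : Fin n → EuclideanSpace ℝ (Fin m))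
    (hXinj : Function.Injective X) (hYinj : Function.Injective Y)
    (hXgp : ∀ s : Finset (EuclideanSpace ℝ (Fin m)), ↑s ⊆ Set.range X → s.card ≤ m + 1 →
      AffineIndependent ℝ (fun p : s => (p : EuclideanSpace ℝ (Fin m))))
    (hYgp : ∀ s : Finset (EuclideanSpace ℝ (Fin m)), ↑s ⊆ Set.range Y → s.card ≤ m + 1 →
      AffineIndependent ℝ (fun p : s => (p : EuclideanSpace ℝ (Fin m))))
    (hiff : ∀ i j, dist (X i) (X j) ≤ 2 * r ↔ dist (Y i) (Y j) ≤ 2 * r)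
    (heq : ∀ i j, dist (X i) (X j) ≤ 2 * r → dist (X i) (X j) = dist (Y i) (Y j)) :
    ∀ s : Finset (Fin n), s.Nonempty →
      ((⋂ i ∈ s, closedBall (X i) r ∩
          {y : EuclideanSpace ℝ (Fin m) | ∀ j, dist y (X i) ≤ dist y (X j)}).Nonempty ↔
       (⋂ i ∈ s, closedBall (Y i) r ∩
          {y : EuclideanSpace ℝ (Fin m) | ∀ j, dist y (Y i) ≤ dist y (Y j)}).Nonempty) := by
  intro s hs
  constructor
  · exact alpha_key r hr X Y hiff heq s hs
  · exact alpha_key r hr Y X (fun i j => (hiff i j).symm)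
      (fun i j h => (heq i j ((hiff i j).mpr h)).symm) s hs
end

section
/- Let X ⊆ ℝ^m be finite, r > 0, and let τ ⊆ X be a nonempty affinely independent subset that is short and Gabriel. Then the circumcenter c of τ satisfies c ∈ B̄_r(x) ∩ V_x for every x ∈ τ. In particular, ⋂_{x∈τ}(B̄_r(x) ∩ V_x) ≠ ∅, i.e., τ is a simplex of the alpha complex A(X,r). -/
open Metric Set

/-- **Short and Gabriel simplices belong to the alpha complex.**
If `τ ⊆ X` is nonempty, affinely independent, and short and Gabriel (with circumcenter `c`
and circumradius `ρ`: `c` lies in the affine span of `τ`, is at distance exactly `ρ ≤ r`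
from every point of `τ`, and no point of `X` is strictly closer than `ρ` to `c`), then
`c ∈ B̄_r(x) ∩ V_x` for every `x ∈ τ`; in particular the intersection
`⋂_{x ∈ τ} (B̄_r(x) ∩ V_x)` is nonempty, i.e. `τ` is a simplex of `A(X,r)`. -/
theorem short_gabriel_mem_alpha_complex {m : ℕ}
    (X : Finset (EuclideanSpace ℝ (Fin m))) (r : ℝ) (hr : 0 < r)
    (τ : Finset (EuclideanSpace ℝ (Fin m))) (hτX : τ ⊆ X) (hτ : τ.Nonempty)
    (hai : AffineIndependent ℝ (fun p : τ => (p : EuclideanSpace ℝ (Fin m))))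
    (c : EuclideanSpace ℝ (Fin m)) (ρ : ℝ)
    (hc : c ∈ affineSpan ℝ (τ : Set (EuclideanSpace ℝ (Fin m))))
    (hdist : ∀ x ∈ τ, dist c x = ρ) (hshort : ρ ≤ r)
    (hgabriel : ∀ x ∈ X, ρ ≤ dist x c) :
    (∀ x ∈ τ, c ∈ closedBall x r ∩
        {y : EuclideanSpace ℝ (Fin m) | ∀ z ∈ X, dist y x ≤ dist y z}) ∧
    (⋂ x ∈ τ, closedBall x r ∩
        {y : EuclideanSpace ℝ (Fin m) | ∀ z ∈ X, dist y x ≤ dist y z}).Nonempty := by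
  have key : ∀ x ∈ τ, c ∈ closedBall x r ∩
      {y : EuclideanSpace ℝ (Fin m) | ∀ z ∈ X, dist y x ≤ dist y z} := by
    intro x hx
    refine ⟨?_, ?_⟩
    · simpa [mem_closedBall, hdist x hx] using hshort
    · intro z hz
      rw [hdist x hx, dist_comm]
      exact hgabriel z hz
  refine ⟨key, ⟨c, ?_⟩⟩
  simp only [Set.mem_iInter]
  exact fun x hx => key x hx
end

section
/- Let X, Y : Fin n → ℝ^m be families of points in Euclidean space satisfying dist(X i, X j) = dist(Y i, Y j) for all indices i, j. Then there exists an isometric bijection φ : ℝ^m → ℝ^m (a rigid motion of Euclidean space) such that φ(X i) = Y i for all i. In other words, the pairwise distances of a finite tuple of points determine its shape up to a rigid motion of ℝ^m. -/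
open scoped RealInnerProductSpace

/-- **Pairwise distances determine a tuple of points up to rigid motion.**
If two families `X Y : Fin n → ℝ^m` have identical pairwise distances, then there is an
isometric bijection (rigid motion) `φ` of `ℝ^m` carrying `X i` to `Y i` for every `i`. -/
theorem exists_isometryEquiv_of_pairwise_dist_eq {m n : ℕ}
    (X Y : Fin n → EuclideanSpace ℝ (Fin m))
    (h : ∀ i j, dist (X i) (X j) = dist (Y i) (Y j)) :
    ∃ φ : EuclideanSpace ℝ (Fin m) ≃ᵢ EuclideanSpace ℝ (Fin m), ∀ i, φ (X i) = Y i := by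
  rcases isEmpty_or_nonempty (Fin n) with hn | hn
  · exact ⟨IsometryEquiv.refl _, fun i => (hn.false i).elim⟩
  obtain ⟨i0⟩ := hn
  set X' : Fin n → EuclideanSpace ℝ (Fin m) := fun i => X i - X i0 with hX'
  set Y' : Fin n → EuclideanSpace ℝ (Fin m) := fun i => Y i - Y i0 with hY'
  have hnx : ∀ a b, ‖X a - X b‖ = ‖Y a - Y b‖ := fun a b => by
    simpa [dist_eq_norm] using h a b
  have hinner : ∀ i j, ⟪X' i, X' j⟫ = ⟪Y' i, Y' j⟫ := by
    intro i j
    rw [real_inner_eq_norm_mul_self_add_norm_mul_self_sub_norm_sub_mul_self_div_two,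
        real_inner_eq_norm_mul_self_add_norm_mul_self_sub_norm_sub_mul_self_div_two]
    simp only [hX', hY', sub_sub_sub_cancel_right]
    rw [hnx i i0, hnx j i0, hnx i j]
  set T : (Fin n → ℝ) →ₗ[ℝ] EuclideanSpace ℝ (Fin m) := Fintype.linearCombination ℝ X' with hT
  set T' : (Fin n → ℝ) →ₗ[ℝ] EuclideanSpace ℝ (Fin m) := Fintype.linearCombination ℝ Y' with hT'
  have hTapp : ∀ c, T c = ∑ i, c i • X' i := fun c => rfl
  have hT'app : ∀ c, T' c = ∑ i, c i • Y' i := fun c => rfl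
  have hnorm : ∀ c, ‖T c‖ = ‖T' c‖ := by
    intro c
    have hi : ⟪T c, T c⟫ = ⟪T' c, T' c⟫ := by
      rw [hTapp, hT'app, sum_inner, sum_inner]
      refine Finset.sum_congr rfl fun i _ => ?_
      rw [inner_sum, inner_sum]
      refine Finset.sum_congr rfl fun j _ => ?_
      rw [real_inner_smul_left, real_inner_smul_left, real_inner_smul_right,
        real_inner_smul_right, hinner]
    have h2 : ‖T c‖ ^ 2 = ‖T' c‖ ^ 2 := by
      rw [← real_inner_self_eq_norm_sq, ← real_inner_self_eq_norm_sq, hi]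
    nlinarith [norm_nonneg (T c), norm_nonneg (T' c)]
  have hker : LinearMap.ker T ≤ LinearMap.ker T' := by
    intro c hc
    rw [LinearMap.mem_ker] at hc ⊢
    have := hnorm c
    rw [hc, norm_zero] at this
    exact norm_eq_zero.mp this.symm
  set L0 : ((Fin n → ℝ) ⧸ LinearMap.ker T) →ₗ[ℝ] EuclideanSpace ℝ (Fin m) := (LinearMap.ker T).liftQ T' hker
    with hL0
  set e : ((Fin n → ℝ) ⧸ LinearMap.ker T) ≃ₗ[ℝ] LinearMap.range T := T.quotKerEquivRange
    with he
  have key : ∀ (c : Fin n → ℝ) (hc : T c ∈ LinearMap.range T),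
      L0 (e.symm ⟨T c, hc⟩) = T' c := by
    intro c hc
    have h1 : e.symm ⟨T c, hc⟩ = Submodule.Quotient.mk c := by
      rw [LinearEquiv.symm_apply_eq]
      exact Subtype.ext (T.quotKerEquivRange_apply_mk c).symm
    rw [h1, hL0, Submodule.liftQ_apply]
  set L : LinearMap.range T →ₗᵢ[ℝ] EuclideanSpace ℝ (Fin m) :=
    { toLinearMap := L0.comp e.symm.toLinearMap
      norm_map' := by
        rintro ⟨v, c, rfl⟩
        have : L0 (e.symm ⟨T c, ⟨c, rfl⟩⟩) = T' c := key c ⟨c, rfl⟩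
        simp only [LinearMap.comp_apply, LinearEquiv.coe_toLinearMap]
        rw [this, ← hnorm]
        rfl } with hL
  set Lext : EuclideanSpace ℝ (Fin m) →ₗᵢ[ℝ] EuclideanSpace ℝ (Fin m) := L.extend with hLext
  have hsurj : Function.Surjective Lext := by
    have hinj : Function.Injective Lext := Lext.injective
    exact (LinearMap.injective_iff_surjective (f := Lext.toLinearMap)).mp hinj
  set Leq : EuclideanSpace ℝ (Fin m) ≃ₗᵢ[ℝ] EuclideanSpace ℝ (Fin m) := LinearIsometryEquiv.ofSurjective Lext hsurj with hLeq
  refine ⟨((IsometryEquiv.addRight (-(X i0))).trans Leq.toIsometryEquiv).trans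
      (IsometryEquiv.addRight (Y i0)), fun i => ?_⟩
  have hmem : X' i ∈ LinearMap.range T := by
    refine ⟨Pi.single i 1, ?_⟩
    rw [hTapp]
    simp [Pi.single_apply, Finset.sum_ite_eq']
  have hXi : T (Pi.single i 1) = X' i := by
    rw [hTapp]; simp [Pi.single_apply, Finset.sum_ite_eq']
  have hYi : T' (Pi.single i 1) = Y' i := by
    rw [hT'app]; simp [Pi.single_apply, Finset.sum_ite_eq']
  have hLX : Leq (X' i) = Y' i := by
    have h1 : Leq (X' i) = Lext (X' i) := by
      rw [hLeq, LinearIsometryEquiv.coe_ofSurjective]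
    have h2 : Lext (X' i) = L ⟨X' i, hmem⟩ := L.extend_apply ⟨X' i, hmem⟩
    have h3 : L ⟨X' i, hmem⟩ = Y' i := by
      have : (⟨X' i, hmem⟩ : LinearMap.range T) = ⟨T (Pi.single i 1), hXi ▸ hmem⟩ :=
        Subtype.ext hXi.symm
      rw [hL]
      show L0 (e.symm ⟨X' i, hmem⟩) = Y' i
      rw [this, key _ _, hYi]
    rw [h1, h2, h3]
  simp only [IsometryEquiv.trans_apply, IsometryEquiv.addRight_apply,
    LinearIsometryEquiv.coe_toIsometryEquiv]
  rw [← sub_eq_add_neg]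
  change Leq (X i - X i0) + Y i0 = Y i
  rw [show X i - X i0 = X' i from rfl, hLX, hY']
  module
end

section
/- Let s and t be k-simplices in Euclidean space ℝ^m (affinely independent (k+1)-tuples) with dist(s_i, s_j) = dist(t_i, t_j) for all indices i, j, and let x, y ∈ ℝ^m be points with dist(x, s_i) = dist(y, t_i) for all i. Then dist(x, circumcenter(s)) < circumradius(s) if and only if dist(y, circumcenter(t)) < circumradius(t). In other words, whether an additional point lies in the interior of the circumball of a simplex is determined by its distances to the vertices together with the pairwise vertex distances. -/
open Finset

/-- If two families of points have the same pairwise distances, then the distance between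
two affine combinations (with the same weights) is the same for both families. -/
theorem dist_affineCombination_congr_of_dist_eq {m : ℕ} {ι : Type*} [Fintype ι]
    {p q : ι → EuclideanSpace ℝ (Fin m)}
    (h : ∀ a b, dist (p a) (p b) = dist (q a) (q b)) {u v : ι → ℝ}
    (hu : ∑ i, u i = 1) (hv : ∑ i, v i = 1) :
    dist (Finset.univ.affineCombination ℝ p u) (Finset.univ.affineCombination ℝ p v) =
      dist (Finset.univ.affineCombination ℝ q u) (Finset.univ.affineCombination ℝ q v) := by
  have h1 := EuclideanGeometry.dist_affineCombination p hu hv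
  have h2 := EuclideanGeometry.dist_affineCombination q hu hv
  dsimp only at h1 h2
  have hsum : (-∑ i₁ : ι, ∑ i₂ : ι,
        (u - v) i₁ * (u - v) i₂ * (dist (p i₁) (p i₂) * dist (p i₁) (p i₂))) / 2 =
      (-∑ i₁ : ι, ∑ i₂ : ι,
        (u - v) i₁ * (u - v) i₂ * (dist (q i₁) (q i₂) * dist (q i₁) (q i₂))) / 2 := by
    congr 2
    refine Finset.sum_congr rfl fun i₁ _ => Finset.sum_congr rfl fun i₂ _ => ?_
    rw [h i₁ i₂]
  calc dist (Finset.univ.affineCombination ℝ p u) (Finset.univ.affineCombination ℝ p v)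
      = Real.sqrt (dist (Finset.univ.affineCombination ℝ p u)
          (Finset.univ.affineCombination ℝ p v) *
          dist (Finset.univ.affineCombination ℝ p u)
          (Finset.univ.affineCombination ℝ p v)) := (Real.sqrt_mul_self dist_nonneg).symm
    _ = Real.sqrt (dist (Finset.univ.affineCombination ℝ q u)
          (Finset.univ.affineCombination ℝ q v) *
          dist (Finset.univ.affineCombination ℝ q u)
          (Finset.univ.affineCombination ℝ q v)) := by rw [h1, h2, hsum]
    _ = _ := Real.sqrt_mul_self dist_nonneg

/-- **Membership in the open circumball is determined by distance data.**
Let `s, t` be `k`-simplices in `ℝ^m` with identical pairwise vertex distances, and let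
`x, y` be points with `dist x (s.points i) = dist y (t.points i)` for all `i`. Then `x`
lies in the interior of the circumball of `s` iff `y` lies in the interior of the
circumball of `t`. -/
theorem mem_interior_circumball_iff_of_dist_eq {m k : ℕ}
    (s t : Affine.Simplex ℝ (EuclideanSpace ℝ (Fin m)) k)
    (h : ∀ i j, dist (s.points i) (s.points j) = dist (t.points i) (t.points j))
    (x y : EuclideanSpace ℝ (Fin m))
    (hxy : ∀ i, dist x (s.points i) = dist y (t.points i)) :
    dist x s.circumcenter < s.circumradius ↔ dist y t.circumcenter < t.circumradius := by
  obtain ⟨w, hw, hcc⟩ :=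
    eq_affineCombination_of_mem_affineSpan_of_fintype t.circumcenter_mem_affineSpan
  set c := Finset.univ.affineCombination ℝ s.points w with hc
  -- each vertex as an affine combination with delta weights
  have hdelta : ∀ (ps : Fin (k + 1) → EuclideanSpace ℝ (Fin m)) (i : Fin (k + 1)),
      Finset.univ.affineCombination ℝ ps (fun j => if j = i then (1 : ℝ) else 0) = ps i := by
    intro ps i
    exact Finset.univ.affineCombination_of_eq_one_of_eq_zero _ _ (Finset.mem_univ i)
      (if_pos rfl) (fun j _ hj => if_neg hj)
  have hdsum : ∀ i : Fin (k + 1), (∑ j, if j = i then (1 : ℝ) else 0) = 1 := by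
    intro i; simp
  -- distances from vertices of `s` to `c` agree with those from vertices of `t` to the
  -- circumcenter of `t`
  have key : ∀ i, dist (s.points i) c = dist (t.points i) t.circumcenter := by
    intro i
    have := dist_affineCombination_congr_of_dist_eq h (hdsum i) hw
    rwa [hdelta s.points i, hdelta t.points i, ← hcc] at this
  -- hence `c` is the circumcenter of `s` and the circumradii agree
  have hc_eq : c = s.circumcenter := by
    refine s.eq_circumcenter_of_dist_eq (affineCombination_mem_affineSpan hw s.points)
      (r := t.circumradius) fun i => ?_
    rw [key i, t.dist_circumcenter_eq_circumradius]
  have hr_eq : s.circumradius = t.circumradius := by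
    rw [← s.dist_circumcenter_eq_circumradius 0, ← hc_eq, key 0,
      t.dist_circumcenter_eq_circumradius]
  -- now compare distances from `x` and `y` using extended families over `Option`
  have hx : dist x s.circumcenter = dist y t.circumcenter := by
    rw [← hc_eq, hcc]
    set p' : Option (Fin (k + 1)) → EuclideanSpace ℝ (Fin m) := fun o => o.elim x s.points
    set q' : Option (Fin (k + 1)) → EuclideanSpace ℝ (Fin m) := fun o => o.elim y t.points
    set u : Option (Fin (k + 1)) → ℝ := fun o => o.elim 1 (fun _ => 0)
    set v : Option (Fin (k + 1)) → ℝ := fun o => o.elim 0 w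
    have hu : ∑ o : Option (Fin (k + 1)), u o = 1 := by
      rw [Fintype.sum_option]; simp [u]
    have hv : ∑ o : Option (Fin (k + 1)), v o = 1 := by
      rw [Fintype.sum_option]; simpa [v] using hw
    have hpq : ∀ a b, dist (p' a) (p' b) = dist (q' a) (q' b) := by
      rintro (_ | i) (_ | j)
      · simp
      · exact hxy j
      · rw [dist_comm, dist_comm (q' _)]; exact hxy i
      · exact h i j
    have hmain := dist_affineCombination_congr_of_dist_eq hpq hu hv
    -- identify the affine combinations
    have hu0 : ∀ o ∈ (Finset.univ : Finset (Option (Fin (k + 1)))), o ≠ none → u o = 0 := by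
      rintro (_ | j) _ hj
      · exact absurd rfl hj
      · simp [u]
    have hup : Finset.univ.affineCombination ℝ p' u = x :=
      Finset.univ.affineCombination_of_eq_one_of_eq_zero _ _ (Finset.mem_univ none) rfl hu0
    have huq : Finset.univ.affineCombination ℝ q' u = y :=
      Finset.univ.affineCombination_of_eq_one_of_eq_zero _ _ (Finset.mem_univ none) rfl hu0
    have hsome : ∀ (r' : Option (Fin (k + 1)) → EuclideanSpace ℝ (Fin m)),
        Finset.univ.affineCombination ℝ r' v =
          Finset.univ.affineCombination ℝ (r' ∘ Option.some) w := by
      intro r'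
      have hsub : (Finset.univ : Finset (Fin (k + 1))).map Function.Embedding.some ⊆
          Finset.univ := Finset.subset_univ _
      have hind : Set.indicator
          (↑((Finset.univ : Finset (Fin (k + 1))).map Function.Embedding.some)) v = v := by
        funext o
        rcases o with _ | j
        · rw [Set.indicator_of_notMem]
          · rfl
          · simp
        · rw [Set.indicator_of_mem]
          simp
      rw [← hind, ← Finset.affineCombination_indicator_subset v r' hsub,
        Finset.affineCombination_map]
      rfl
    have hvp : Finset.univ.affineCombination ℝ p' v = c := by rw [hsome]; rfl
    have hvq : Finset.univ.affineCombination ℝ q' v =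
        Finset.univ.affineCombination ℝ t.points w := by rw [hsome]; rfl
    rw [hup, hvp, huq, hvq] at hmain
    rw [← hcc] at hmain ⊢
    rw [hmain, hcc]
  rw [hx, hr_eq]
end

section
/- Let X ⊆ ℝ² be a finite set such that no three points of X are collinear and no four points of X lie on a common circle. Suppose x₁, x₂, y₁, y₂ ∈ X are four distinct points with V_{x₁} ∩ V_{x₂} ≠ ∅ and V_{y₁} ∩ V_{y₂} ≠ ∅ (i.e., {x₁,x₂} and {y₁,y₂} are Delaunay edges of X). Then the closed segments [x₁, x₂] and [y₁, y₂] are disjoint. In particular, the edges of the Delaunay graph (and hence of any alpha complex on X) form a planar graph with non-crossing straight-line edges. -/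
open Set

private lemma g_combo {E : Type*} [NormedAddCommGroup E] [InnerProductSpace ℝ E]
    (p q u v : E) {a b : ℝ} (hab : a + b = 1) :
    dist (a • u + b • v) p ^ 2 - dist (a • u + b • v) q ^ 2
      = a * (dist u p ^ 2 - dist u q ^ 2) + b * (dist v p ^ 2 - dist v q ^ 2) := by
  have h : ∀ z c : E, dist z c ^ 2 = ‖z‖ ^ 2 - 2 * inner ℝ z c + ‖c‖ ^ 2 := by
    intro z c; rw [dist_eq_norm, norm_sub_sq_real]
  have h1 : ∀ c : E, (inner ℝ (a • u + b • v) c : ℝ) = a * inner ℝ u c + b * inner ℝ v c := by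
    intro c; rw [inner_add_left, real_inner_smul_left, real_inner_smul_left]
  rw [h, h, h, h, h, h, h1, h1]
  linear_combination (‖q‖ ^ 2 - ‖p‖ ^ 2) * hab

private lemma eq_of_sq_eq {a b : ℝ} (ha : 0 ≤ a) (hb : 0 ≤ b) (h : a ^ 2 = b ^ 2) : a = b := by
  have h2 : (a - b) * (a + b) = 0 := by linear_combination h
  rcases mul_eq_zero.mp h2 with h3 | h3
  · linarith
  · linarith

private lemma open_seg_dist_lt {E : Type*} [NormedAddCommGroup E] [InnerProductSpace ℝ E]
    {a b c w : E} {ρ : ℝ} (hab : a ≠ b) (ha : dist a c = ρ) (hb : dist b c = ρ)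
    (hw : w ∈ openSegment ℝ a b) : dist w c < ρ := by
  have hρ0 : 0 ≤ ρ := ha ▸ dist_nonneg
  have hρ : 0 < ρ := by
    rcases hρ0.lt_or_eq with h | h
    · exact h
    · exfalso
      apply hab
      have ha0 : a = c := by rw [← dist_eq_zero, ha, ← h]
      have hb0 : b = c := by rw [← dist_eq_zero, hb, ← h]
      rw [ha0, hb0]
  have hsub := (strictConvex_closedBall ℝ c ρ).openSegment_subset
      (by simp [Metric.mem_closedBall, ha]) (by simp [Metric.mem_closedBall, hb]) hab
  have h2 := hsub hw
  rwa [interior_closedBall c hρ.ne', Metric.mem_ball] at h2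

set_option maxHeartbeats 1000000 in
/-- **Delaunay edges do not cross.**
Let `X ⊆ ℝ²` be finite with no three points collinear and no four points on a common
circle. If `{x₁, x₂}` and `{y₁, y₂}` are Delaunay edges of `X` (their Voronoi regions
intersect) on four distinct vertices, then the closed segments `[x₁, x₂]` and `[y₁, y₂]`
are disjoint. -/
theorem delaunay_edges_disjoint (X : Finset (EuclideanSpace ℝ (Fin 2)))
    (h3 : ∀ x ∈ X, ∀ y ∈ X, ∀ z ∈ X, x ≠ y → x ≠ z → y ≠ z →
      ¬ Collinear ℝ ({x, y, z} : Set (EuclideanSpace ℝ (Fin 2))))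
    (h4 : ∀ a ∈ X, ∀ b ∈ X, ∀ c ∈ X, ∀ d ∈ X,
      a ≠ b → a ≠ c → a ≠ d → b ≠ c → b ≠ d → c ≠ d →
      ¬ ∃ (o : EuclideanSpace ℝ (Fin 2)) (ρ : ℝ),
        dist a o = ρ ∧ dist b o = ρ ∧ dist c o = ρ ∧ dist d o = ρ)
    (x₁ x₂ y₁ y₂ : EuclideanSpace ℝ (Fin 2))
    (hx₁ : x₁ ∈ X) (hx₂ : x₂ ∈ X) (hy₁ : y₁ ∈ X) (hy₂ : y₂ ∈ X)
    (h12 : x₁ ≠ x₂) (h11 : x₁ ≠ y₁) (h12' : x₁ ≠ y₂) (h21 : x₂ ≠ y₁) (h22 : x₂ ≠ y₂)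
    (hyy : y₁ ≠ y₂)
    (hVx : ({p : EuclideanSpace ℝ (Fin 2) | ∀ z ∈ X, dist p x₁ ≤ dist p z} ∩
            {p : EuclideanSpace ℝ (Fin 2) | ∀ z ∈ X, dist p x₂ ≤ dist p z}).Nonempty)
    (hVy : ({p : EuclideanSpace ℝ (Fin 2) | ∀ z ∈ X, dist p y₁ ≤ dist p z} ∩
            {p : EuclideanSpace ℝ (Fin 2) | ∀ z ∈ X, dist p y₂ ≤ dist p z}).Nonempty) :
    Disjoint (segment ℝ x₁ x₂) (segment ℝ y₁ y₂) := by
  obtain ⟨p, hp1, hp2⟩ := hVx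
  obtain ⟨q, hq1, hq2⟩ := hVy
  simp only [Set.mem_setOf_eq] at hp1 hp2 hq1 hq2
  have hpx2 : dist p x₂ = dist p x₁ := le_antisymm (hp2 x₁ hx₁) (hp1 x₂ hx₂)
  have hqy2 : dist q y₂ = dist q y₁ := le_antisymm (hq2 y₁ hy₁) (hq1 y₂ hy₂)
  -- any point of X inside the open segment [x₁,x₂] gives a contradiction
  have hXcase : ∀ z ∈ X, z ∉ openSegment ℝ x₁ x₂ := by
    intro z hz hzo
    have hlt : dist z p < dist p x₁ :=
      open_seg_dist_lt h12 (dist_comm x₁ p) (by rw [dist_comm]; exact hpx2) hzo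
    have h0 := hp1 z hz
    rw [dist_comm] at hlt
    linarith
  have hYcase : ∀ z ∈ X, z ∉ openSegment ℝ y₁ y₂ := by
    intro z hz hzo
    have hlt : dist z q < dist q y₁ :=
      open_seg_dist_lt hyy (dist_comm y₁ q) (by rw [dist_comm]; exact hqy2) hzo
    have h0 := hq1 z hz
    rw [dist_comm] at hlt
    linarith
  rw [Set.disjoint_left]
  intro w hwx hwy
  rw [← insert_endpoints_openSegment, Set.mem_insert_iff, Set.mem_insert_iff] at hwx hwy
  rcases hwx with heq | heq | hxo
  · rw [heq] at hwy
    rcases hwy with h | h | h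
    · exact h11 h
    · exact h12' h
    · exact hYcase x₁ hx₁ h
  · rw [heq] at hwy
    rcases hwy with h | h | h
    · exact h21 h
    · exact h22 h
    · exact hYcase x₂ hx₂ h
  rcases hwy with heq | heq | hyo
  · rw [heq] at hxo
    exact hXcase y₁ hy₁ hxo
  · rw [heq] at hxo
    exact hXcase y₂ hy₂ hxo
  -- main case: w interior to both segments
  obtain ⟨a, b, ha, hb, hab, hw1⟩ := hxo
  obtain ⟨c, d, hc, hd, hcd, hw2⟩ := hyo
  -- abbreviations (plain reals, no defeq traps)
  obtain ⟨r, hr⟩ : ∃ r : ℝ, dist p x₁ = r := ⟨_, rfl⟩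
  obtain ⟨s, hs⟩ : ∃ s : ℝ, dist q y₁ = s := ⟨_, rfl⟩
  rw [hr] at hpx2
  rw [hs] at hqy2
  have hr0 : 0 ≤ r := hr ▸ dist_nonneg
  have hs0 : 0 ≤ s := hs ▸ dist_nonneg
  -- values of the affine power-difference function at the four points
  have hgx1 : dist x₁ p ^ 2 - dist x₁ q ^ 2 = r ^ 2 - dist q x₁ ^ 2 := by
    rw [dist_comm x₁ p, dist_comm x₁ q, hr]
  have hgx2 : dist x₂ p ^ 2 - dist x₂ q ^ 2 = r ^ 2 - dist q x₂ ^ 2 := by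
    rw [dist_comm x₂ p, dist_comm x₂ q, hpx2]
  have hgy1 : dist y₁ p ^ 2 - dist y₁ q ^ 2 = dist p y₁ ^ 2 - s ^ 2 := by
    rw [dist_comm y₁ p, dist_comm y₁ q, hs]
  have hgy2 : dist y₂ p ^ 2 - dist y₂ q ^ 2 = dist p y₂ ^ 2 - s ^ 2 := by
    rw [dist_comm y₂ p, dist_comm y₂ q, hqy2]
  have hA1 : dist x₁ p ^ 2 - dist x₁ q ^ 2 ≤ r ^ 2 - s ^ 2 := by
    have h1 : s ≤ dist q x₁ := hs ▸ hq1 x₁ hx₁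
    have h2 := pow_le_pow_left₀ hs0 h1 2
    rw [hgx1]
    linarith
  have hA2 : dist x₂ p ^ 2 - dist x₂ q ^ 2 ≤ r ^ 2 - s ^ 2 := by
    have h1 : s ≤ dist q x₂ := hs ▸ hq1 x₂ hx₂
    have h2 := pow_le_pow_left₀ hs0 h1 2
    rw [hgx2]
    linarith
  have hB1 : r ^ 2 - s ^ 2 ≤ dist y₁ p ^ 2 - dist y₁ q ^ 2 := by
    have h1 : r ≤ dist p y₁ := hr ▸ hp1 y₁ hy₁
    have h2 := pow_le_pow_left₀ hr0 h1 2
    rw [hgy1]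
    linarith
  have hB2 : r ^ 2 - s ^ 2 ≤ dist y₂ p ^ 2 - dist y₂ q ^ 2 := by
    have h1 : r ≤ dist p y₂ := hr ▸ hp1 y₂ hy₂
    have h2 := pow_le_pow_left₀ hr0 h1 2
    rw [hgy2]
    linarith
  have hAnot : dist x₁ p ^ 2 - dist x₁ q ^ 2 < r ^ 2 - s ^ 2 ∨
      dist x₂ p ^ 2 - dist x₂ q ^ 2 < r ^ 2 - s ^ 2 := by
    by_contra hcon
    push_neg at hcon
    obtain ⟨h1, h2⟩ := hcon
    have e1 : dist q x₁ = s := by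
      refine eq_of_sq_eq dist_nonneg hs0 ?_
      rw [hgx1] at hA1 h1
      linarith
    have e2 : dist q x₂ = s := by
      refine eq_of_sq_eq dist_nonneg hs0 ?_
      rw [hgx2] at hA2 h2
      linarith
    exact h4 x₁ hx₁ x₂ hx₂ y₁ hy₁ y₂ hy₂ h12 h11 h12' h21 h22 hyy
      ⟨q, s, by rw [dist_comm]; exact e1, by rw [dist_comm]; exact e2,
        by rw [dist_comm]; exact hs, by rw [dist_comm]; exact hqy2⟩
  have hBnot : r ^ 2 - s ^ 2 < dist y₁ p ^ 2 - dist y₁ q ^ 2 ∨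
      r ^ 2 - s ^ 2 < dist y₂ p ^ 2 - dist y₂ q ^ 2 := by
    by_contra hcon
    push_neg at hcon
    obtain ⟨h1, h2⟩ := hcon
    have e1 : dist p y₁ = r := by
      refine eq_of_sq_eq dist_nonneg hr0 ?_
      rw [hgy1] at hB1 h1
      linarith
    have e2 : dist p y₂ = r := by
      refine eq_of_sq_eq dist_nonneg hr0 ?_
      rw [hgy2] at hB2 h2
      linarith
    exact h4 x₁ hx₁ x₂ hx₂ y₁ hy₁ y₂ hy₂ h12 h11 h12' h21 h22 hyy
      ⟨p, r, by rw [dist_comm]; exact hr, by rw [dist_comm]; exact hpx2,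
        by rw [dist_comm]; exact e1, by rw [dist_comm]; exact e2⟩
  have hgw1 : dist w p ^ 2 - dist w q ^ 2
      = a * (dist x₁ p ^ 2 - dist x₁ q ^ 2) + b * (dist x₂ p ^ 2 - dist x₂ q ^ 2) := by
    rw [← hw1]
    exact g_combo p q x₁ x₂ hab
  have hgw2 : dist w p ^ 2 - dist w q ^ 2
      = c * (dist y₁ p ^ 2 - dist y₁ q ^ 2) + d * (dist y₂ p ^ 2 - dist y₂ q ^ 2) := by
    rw [← hw2]
    exact g_combo p q y₁ y₂ hcd
  have hsum1 : a * (r ^ 2 - s ^ 2) + b * (r ^ 2 - s ^ 2) = r ^ 2 - s ^ 2 := by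
    rw [← add_mul, hab, one_mul]
  have hsum2 : c * (r ^ 2 - s ^ 2) + d * (r ^ 2 - s ^ 2) = r ^ 2 - s ^ 2 := by
    rw [← add_mul, hcd, one_mul]
  have hlt1 : dist w p ^ 2 - dist w q ^ 2 < r ^ 2 - s ^ 2 := by
    rcases hAnot with h | h
    · have t1 := mul_lt_mul_of_pos_left h ha
      have t2 := mul_le_mul_of_nonneg_left hA2 hb.le
      linarith
    · have t1 := mul_le_mul_of_nonneg_left hA1 ha.le
      have t2 := mul_lt_mul_of_pos_left h hb
      linarith
  have hlt2 : r ^ 2 - s ^ 2 < dist w p ^ 2 - dist w q ^ 2 := by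
    rcases hBnot with h | h
    · have t1 := mul_lt_mul_of_pos_left h hc
      have t2 := mul_le_mul_of_nonneg_left hB2 hd.le
      linarith
    · have t1 := mul_le_mul_of_nonneg_left hB1 hc.le
      have t2 := mul_lt_mul_of_pos_left h hd
      linarith
  linarith
end

section
/- Let α, β > 0 and let v : ℝ → ℝ² be a curve such that for all t ≥ 0, v has derivative (α − β‖v(t)‖²) · v(t) at t, and suppose v(0) ≠ 0. Then ‖v(t)‖ → √(α/β) as t → ∞. That is, an isolated D'Orsogna sensor, feeling only the self-propulsion and friction force (α − β‖v‖²)v, approaches the asymptotic speed √(α/β). -/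
open Filter

private lemma const_of_hasDerivAt_zero' {E : Type*} [NormedAddCommGroup E] [NormedSpace ℝ E]
    {f : ℝ → E} (hf : ∀ t : ℝ, 0 ≤ t → HasDerivAt f 0 t) {t : ℝ} (ht : 0 ≤ t) :
    f t = f 0 := by
  have hcont : ContinuousOn f (Set.Icc 0 t) := fun x hx =>
    ((hf x hx.1).continuousAt).continuousWithinAt
  exact constant_of_has_deriv_right_zero hcont
    (fun x hx => (hf x hx.1).hasDerivWithinAt) t (Set.right_mem_Icc.2 ht)

/-- **An isolated D'Orsogna sensor approaches its asymptotic speed.**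
If `v : ℝ → ℝ²` satisfies `v' = (α − β‖v‖²) v` for all `t ≥ 0` with `α, β > 0` and
`v 0 ≠ 0`, then `‖v t‖ → √(α/β)` as `t → ∞`. -/
theorem dOrsogna_speed_tendsto {α β : ℝ} (hα : 0 < α) (hβ : 0 < β)
    (v : ℝ → EuclideanSpace ℝ (Fin 2))
    (hv : ∀ t : ℝ, 0 ≤ t → HasDerivAt v ((α - β * ‖v t‖ ^ 2) • v t) t)
    (h0 : v 0 ≠ 0) :
    Tendsto (fun t => ‖v t‖) atTop (nhds (Real.sqrt (α / β))) := by
  -- the coefficient function, extended continuously to negative times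
  set lam : ℝ → ℝ := fun t => α - β * ‖v (max t 0)‖ ^ 2 with hlam_def
  have hvc : ∀ t : ℝ, 0 ≤ t → ContinuousAt v t := fun t ht => (hv t ht).continuousAt
  have hmaxc : Continuous fun t : ℝ => v (max t 0) := by
    rw [continuous_iff_continuousAt]
    intro t
    exact ContinuousAt.comp (hvc (max t 0) (le_max_right _ _))
      ((continuous_id.max continuous_const).continuousAt)
  have hlamc : Continuous lam :=
    continuous_const.sub (continuous_const.mul (hmaxc.norm.pow 2))
  have hlam_eq : ∀ t : ℝ, 0 ≤ t → lam t = α - β * ‖v t‖ ^ 2 := fun t ht => by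
    simp [hlam_def, max_eq_left ht]
  -- its antiderivative
  set Lam : ℝ → ℝ := fun t => ∫ s in (0:ℝ)..t, lam s with hLam_def
  have hLam : ∀ t : ℝ, HasDerivAt Lam (lam t) t := fun t =>
    intervalIntegral.integral_hasDerivAt_right (hlamc.intervalIntegrable 0 t)
      (hlamc.stronglyMeasurableAtFilter _ _) hlamc.continuousAt
  have hLam0 : Lam 0 = 0 := intervalIntegral.integral_same
  -- v never vanishes on [0,∞)
  have key : ∀ t : ℝ, 0 ≤ t → Real.exp (-Lam t) • v t = v 0 := by
    intro t ht
    have hg : ∀ s : ℝ, 0 ≤ s → HasDerivAt (fun u => Real.exp (-Lam u) • v u) 0 s := by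
      intro s hs
      have h1 : HasDerivAt (fun u => Real.exp (-Lam u))
          (Real.exp (-Lam s) * -lam s) s := ((hLam s).neg).exp
      have h2 := h1.smul (hv s hs)
      refine h2.congr_deriv ?_
      rw [hlam_eq s hs, smul_smul]
      module
    have := const_of_hasDerivAt_zero' hg ht
    simpa [hLam0] using this
  have hne : ∀ t : ℝ, 0 ≤ t → v t ≠ 0 := by
    intro t ht h
    exact h0 (by rw [← key t ht, h, smul_zero])
  have hpos : ∀ t : ℝ, 0 ≤ t → 0 < ‖v t‖ := fun t ht => norm_pos_iff.2 (hne t ht)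
  have hypos : ∀ t : ℝ, 0 ≤ t → 0 < ‖v t‖ ^ 2 := fun t ht => pow_pos (hpos t ht) 2
  -- derivative of the squared speed
  have hy' : ∀ t : ℝ, 0 ≤ t → HasDerivAt (fun s => ‖v s‖ ^ 2)
      (2 * (α - β * ‖v t‖ ^ 2) * ‖v t‖ ^ 2) t := by
    intro t ht
    have h := HasDerivAt.inner ℝ (hv t ht) (hv t ht)
    simp only [real_inner_smul_right, real_inner_smul_left,
      real_inner_self_eq_norm_sq] at h
    refine h.congr_deriv ?_
    ring
  -- derivative of the inverse squared speed: a linear ODE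
  have hz' : ∀ t : ℝ, 0 ≤ t → HasDerivAt (fun s => (‖v s‖ ^ 2)⁻¹)
      (2*β - 2*α*(‖v t‖^2)⁻¹) t := by
    intro t ht
    have h := (hy' t ht).inv (ne_of_gt (hypos t ht))
    refine h.congr_deriv ?_
    have hy0 := ne_of_gt (hypos t ht)
    generalize ‖v t‖ ^ 2 = y at hy0 ⊢
    field_simp
    ring
  set c : ℝ := (‖v 0‖ ^ 2)⁻¹ - β / α with hc
  -- derivative of the explicit solution
  have hw' : ∀ t : ℝ, HasDerivAt (fun s => β/α + c * Real.exp (-(2*α*s)))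
      (2*β - 2*α*(β/α + c*Real.exp (-(2*α*t)))) t := by
    intro t
    have he : HasDerivAt (fun s : ℝ => Real.exp (-(2*α*s)))
        (Real.exp (-(2*α*t)) * (-(2*α))) t := by
      have h1 : HasDerivAt (fun s : ℝ => -(2*α*s)) (-(2*α)) t := by
        exact (((hasDerivAt_id' t).const_mul (2*α)).fun_neg).congr_deriv (by ring)
      exact h1.exp
    have h := (he.const_mul c).const_add (β/α)
    refine h.congr_deriv ?_
    have : α ≠ 0 := ne_of_gt hα
    field_simp
    ring
  -- uniqueness: the inverse squared speed equals the explicit solution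
  have heq : ∀ t : ℝ, 0 ≤ t → (‖v t‖^2)⁻¹ = β/α + c * Real.exp (-(2*α*t)) := by
    intro t ht
    have hd : ∀ s : ℝ, 0 ≤ s → HasDerivAt
        (fun u => Real.exp (2*α*u) *
          ((‖v u‖^2)⁻¹ - (β/α + c * Real.exp (-(2*α*u))))) 0 s := by
      intro s hs
      have h1 : HasDerivAt (fun u : ℝ => Real.exp (2*α*u))
          (Real.exp (2*α*s) * (2*α)) s := by
        have := ((hasDerivAt_id s).const_mul (2*α)).exp
        simpa using this
      have h2 := (hz' s hs).sub (hw' s)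
      have h3 := h1.mul h2
      refine h3.congr_deriv ?_
      simp only [Pi.sub_apply]
      ring
    have h := const_of_hasDerivAt_zero' hd ht
    simp only [mul_zero, neg_zero, Real.exp_zero, mul_one] at h
    have h0' : (‖v 0‖^2)⁻¹ - (β/α + c) = 0 := by rw [hc]; ring
    rw [h0', mul_zero] at h
    have hexp : Real.exp (2*α*t) ≠ 0 := Real.exp_ne_zero _
    have := mul_eq_zero.1 h
    rcases this with h' | h'
    · exact absurd h' hexp
    · linarith [h']
  -- pass to the limit
  have h1 : Tendsto (fun t : ℝ => 2*α*t) atTop atTop :=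
    Tendsto.const_mul_atTop (by positivity) tendsto_id
  have h2 : Tendsto (fun t : ℝ => Real.exp (-(2*α*t))) atTop (nhds 0) :=
    Real.tendsto_exp_neg_atTop_nhds_zero.comp h1
  have hwlim : Tendsto (fun t : ℝ => β/α + c * Real.exp (-(2*α*t))) atTop
      (nhds (β/α)) := by
    have := tendsto_const_nhds (x := β/α) (f := atTop (α := ℝ)) |>.add
      (h2.const_mul c)
    simpa using this
  have hzlim : Tendsto (fun t : ℝ => (‖v t‖^2)⁻¹) atTop (nhds (β/α)) := by
    refine hwlim.congr' ?_
    filter_upwards [eventually_ge_atTop (0:ℝ)] with t ht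
    exact (heq t ht).symm
  have hba : β/α ≠ 0 := ne_of_gt (div_pos hβ hα)
  have hylim : Tendsto (fun t : ℝ => ‖v t‖^2) atTop (nhds (α/β)) := by
    have := hzlim.inv₀ hba
    simpa [inv_div] using this
  have := (Real.continuous_sqrt.continuousAt.tendsto).comp hylim
  refine this.congr fun t => ?_
  simp [Real.sqrt_sq (norm_nonneg _)]
end

section
/- Let α, β > 0 and let s : ℝ → ℝ be a function such that for all t ≥ 0, s has derivative 2(α − β·s(t))·s(t) at t, and suppose s(0) > 0. Then s(t) → α/β as t → ∞. (This is the equation satisfied by the squared speed s = ‖v‖² of an isolated D'Orsogna sensor.) -/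
open Filter

/-- A function with zero derivative at every nonnegative point is constant on `[0, ∞)`. -/
lemma const_of_deriv_zero_nonneg (f : ℝ → ℝ)
    (hf : ∀ x : ℝ, 0 ≤ x → HasDerivAt f 0 x) :
    ∀ t : ℝ, 0 ≤ t → f t = f 0 := by
  intro t ht
  refine constant_of_has_deriv_right_zero (a := 0) (b := t) ?_ ?_ t ⟨ht, le_refl t⟩
  · intro x hx
    exact ((hf x hx.1).continuousAt).continuousWithinAt
  · intro x hx
    exact (hf x hx.1).hasDerivWithinAt

/-- **The squared speed of an isolated D'Orsogna sensor approaches `α/β`.**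
If `s : ℝ → ℝ` satisfies `s' = 2(α − β s) s` for all `t ≥ 0` with `α, β > 0` and
`s 0 > 0`, then `s t → α/β` as `t → ∞`. -/
theorem dOrsogna_squared_speed_tendsto {α β : ℝ} (hα : 0 < α) (hβ : 0 < β)
    (s : ℝ → ℝ)
    (hs : ∀ t : ℝ, 0 ≤ t → HasDerivAt s (2 * (α - β * s t) * s t) t)
    (h0 : 0 < s 0) :
    Tendsto s atTop (nhds (α / β)) := by
  -- continuity of s on [0,∞)
  have hscont : ∀ t : ℝ, 0 ≤ t → ContinuousAt s t := fun t ht => (hs t ht).continuousAt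
  -- modified coefficient, continuous on all of ℝ
  set g : ℝ → ℝ := fun t => 2 * (α - β * s (max t 0)) with hg_def
  have hgcont : Continuous g := by
    rw [continuous_iff_continuousAt]
    intro t
    have h1 : ContinuousAt (fun t : ℝ => max t 0) t := (continuous_id.max continuous_const).continuousAt
    have h2 : ContinuousAt s (max t 0) := hscont _ (le_max_right _ _)
    have : ContinuousAt (fun t : ℝ => s (max t 0)) t := ContinuousAt.comp (x := t) h2 h1
    exact (continuous_const.continuousAt).mul ((continuous_const.continuousAt).sub
      ((continuous_const.continuousAt).mul this))
  have hgeq : ∀ t : ℝ, 0 ≤ t → g t = 2 * (α - β * s t) := by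
    intro t ht; simp [hg_def, max_eq_left ht]
  set G : ℝ → ℝ := fun t => ∫ x in (0:ℝ)..t, g x with hG_def
  have hG : ∀ t : ℝ, HasDerivAt G (g t) t := by
    intro t
    exact intervalIntegral.integral_hasDerivAt_right
      (hgcont.intervalIntegrable _ _)
      (hgcont.stronglyMeasurableAtFilter _ _)
      hgcont.continuousAt
  have hG0 : G 0 = 0 := by simp [hG_def]
  -- positivity of s on [0,∞)
  have hpos : ∀ t : ℝ, 0 ≤ t → 0 < s t := by
    have hconst : ∀ t : ℝ, 0 ≤ t →
        s t * Real.exp (-G t) = s 0 * Real.exp (-G 0) := by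
      apply const_of_deriv_zero_nonneg
      intro x hx
      have hd : HasDerivAt (fun t => s t * Real.exp (-G t))
          ((2 * (α - β * s x) * s x) * Real.exp (-G x)
            + s x * (Real.exp (-G x) * -(g x))) x := by
        have h1 : HasDerivAt (fun t => Real.exp (-G t)) (Real.exp (-G x) * -(g x)) x :=
          (((hG x).neg).exp)
        exact (hs x hx).mul h1
      have : (2 * (α - β * s x) * s x) * Real.exp (-G x)
            + s x * (Real.exp (-G x) * -(g x)) = 0 := by
        rw [hgeq x hx]; ring
      rwa [this] at hd
    intro t ht
    have h := hconst t ht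
    rw [hG0, neg_zero, Real.exp_zero, mul_one] at h
    have : s t = s 0 * Real.exp (G t) := by
      rw [← h, mul_assoc, ← Real.exp_add]
      simp
    rw [this]
    positivity
  -- the transformed function w
  have hconst2 : ∀ t : ℝ, 0 ≤ t →
      ((s t)⁻¹ - β / α) * Real.exp (2 * α * t)
        = ((s 0)⁻¹ - β / α) * Real.exp (2 * α * 0) := by
    apply const_of_deriv_zero_nonneg
    intro x hx
    have hsx := (hpos x hx).ne'
    have h1 : HasDerivAt (fun t => (s t)⁻¹ - β / α)
        (-(2 * (α - β * s x) * s x) / (s x) ^ 2) x :=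
      ((hs x hx).inv hsx).sub_const _
    have h2 : HasDerivAt (fun t : ℝ => Real.exp (2 * α * t))
        (Real.exp (2 * α * x) * (2 * α)) x := by
      have : HasDerivAt (fun t : ℝ => 2 * α * t) (2 * α) x := by
        simpa using (hasDerivAt_id x).const_mul (2 * α)
      exact this.exp
    have hd := h1.mul h2
    have heq : -(2 * (α - β * s x) * s x) / s x ^ 2 * Real.exp (2 * α * x)
        + ((s x)⁻¹ - β / α) * (Real.exp (2 * α * x) * (2 * α)) = 0 := by
      field_simp
      ring
    rwa [heq] at hd
  -- explicit formula for s on [0,∞)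
  have hformula : ∀ t : ℝ, 0 ≤ t →
      s t = (((s 0)⁻¹ - β / α) * Real.exp (-(2 * α) * t) + β / α)⁻¹ := by
    intro t ht
    have h := hconst2 t ht
    rw [mul_zero, Real.exp_zero, mul_one] at h
    have hst := (hpos t ht).ne'
    have he : Real.exp (2 * α * t) ≠ 0 := Real.exp_ne_zero _
    have hinv : (s t)⁻¹ = ((s 0)⁻¹ - β / α) * Real.exp (-(2 * α) * t) + β / α := by
      have : (s t)⁻¹ - β / α = ((s 0)⁻¹ - β / α) * Real.exp (-(2 * α) * t) := by
        rw [neg_mul, Real.exp_neg]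
        field_simp at h ⊢
        linarith [h]
      linarith [this]
    rw [← hinv, inv_inv]
  -- limit of the explicit formula
  have hlim : Tendsto (fun t : ℝ => (((s 0)⁻¹ - β / α) * Real.exp (-(2 * α) * t) + β / α)⁻¹)
      atTop (nhds (α / β)) := by
    have h1 : Tendsto (fun t : ℝ => -(2 * α) * t) atTop atBot :=
      tendsto_id.const_mul_atTop_of_neg (by linarith : -(2 * α) < 0)
    have h2 : Tendsto (fun t : ℝ => Real.exp (-(2 * α) * t)) atTop (nhds 0) :=
      Real.tendsto_exp_atBot.comp h1
    have h3 : Tendsto (fun t : ℝ => ((s 0)⁻¹ - β / α) * Real.exp (-(2 * α) * t) + β / α)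
        atTop (nhds (β / α)) := by
      have := (h2.const_mul ((s 0)⁻¹ - β / α)).add_const (β / α)
      simpa using this
    have h4 : (β / α) ≠ 0 := by positivity
    have := h3.inv₀ h4
    rwa [inv_div] at this
  exact hlim.congr' ((eventually_ge_atTop (0:ℝ)).mono fun t ht => (hformula t ht).symm)
end
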